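/- Suppose the nonlinear system x_{k+1} = f(x_k, u_k), y_k = g(x_k, u_k) admits a Koopman linear embedding (Φ, A, B, C, D) of dimension n_z. Let (u_d, y_d) be a length-n_d input-output trajectory of the nonlinear system, let 1 ≤ L ≤ n_d, and let H_d := col(𝓗_L(u_d), 𝓗_L(y_d)) be the trajectory library formed by the order-L Hankel matrices of u_d and y_d. Then rank(H_d) ≤ mL + n_z. Consequently, if rank(H_d) > mL + n̄_z for some n̄_z, then the nonlinear system admits no Koopman linear embedding of dimension at most n̄_z. -/

import Mathlib

/-!
STATEMENT 11: If the nonlinear system admits a Koopman linear embedding of dimension n_z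
and (u_d, y_d) is a length-n_d trajectory of the system with 1 ≤ L ≤ n_d, then the
trajectory library H_d := col(𝓗_L(u_d), 𝓗_L(y_d)) satisfies rank(H_d) ≤ mL + n_z.
Consequently, if rank(H_d) > mL + n̄_z, then the system admits no Koopman linear
embedding of dimension at most n̄_z.
-/

/-- Order-`L` (block) Hankel matrix of a length-`T` sequence of vectors in `ℝ^q`:
the `((i,a), j)` entry is the `a`-th component of `ω_{i+j}`. -/
def hankel (q L T : ℕ) (ω : ℕ → Fin q → ℝ) :
    Matrix (Fin L × Fin q) (Fin (T - L + 1)) ℝ :=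
  Matrix.of fun ia j => ω ((ia.1 : ℕ) + (j : ℕ)) ia.2


open Finset in
lemma koopman_rank_aux
    (n m p nz nd L : ℕ) (hL : 1 ≤ L) (hLnd : L ≤ nd)
    (f : (Fin n → ℝ) → (Fin m → ℝ) → (Fin n → ℝ))
    (g : (Fin n → ℝ) → (Fin m → ℝ) → (Fin p → ℝ))
    (Φ : (Fin n → ℝ) → (Fin nz → ℝ))
    (A : Matrix (Fin nz) (Fin nz) ℝ) (B : Matrix (Fin nz) (Fin m) ℝ)
    (C : Matrix (Fin p) (Fin nz) ℝ) (D : Matrix (Fin p) (Fin m) ℝ)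
    (hdyn : ∀ x u, Φ (f x u) = A.mulVec (Φ x) + B.mulVec u)
    (hout : ∀ x u, g x u = C.mulVec (Φ x) + D.mulVec u)
    (ud : ℕ → Fin m → ℝ) (yd : ℕ → Fin p → ℝ)
    (hdata : ∃ x : ℕ → (Fin n → ℝ),
      ∀ k < nd, x (k + 1) = f (x k) (ud k) ∧ yd k = g (x k) (ud k)) :
    (Matrix.fromRows (hankel m L nd ud) (hankel p L nd yd)).rank ≤ m * L + nz := by
  obtain ⟨x, hx⟩ := hdata
  -- state propagation
  have hprop : ∀ i j, j + i ≤ nd →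
      Φ (x (j + i)) = (A ^ i).mulVec (Φ (x j))
        + ∑ l ∈ Finset.range i, (A ^ (i - 1 - l) * B).mulVec (ud (j + l)) := by
    intro i
    induction i with
    | zero => intro j _; simp
    | succ i ih =>
      intro j hj
      have hlt : j + i < nd := by omega
      have h1 := (hx (j + i) hlt).1
      have hx' : x (j + (i + 1)) = f (x (j + i)) (ud (j + i)) := h1
      rw [hx', hdyn, ih j (by omega), Matrix.mulVec_add, Matrix.mulVec_mulVec,
        ← pow_succ']
      have hsum : A.mulVec (∑ l ∈ Finset.range i, (A ^ (i - 1 - l) * B).mulVec (ud (j + l)))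
          = ∑ l ∈ Finset.range i, (A ^ (i + 1 - 1 - l) * B).mulVec (ud (j + l)) := by
        have hm := map_sum (Matrix.mulVecLin A)
          (fun l => (A ^ (i - 1 - l) * B).mulVec (ud (j + l))) (Finset.range i)
        simp only [Matrix.mulVecLin_apply] at hm
        rw [hm]
        refine Finset.sum_congr rfl fun l hl => ?_
        have hli : l < i := Finset.mem_range.mp hl
        rw [Matrix.mulVec_mulVec, ← Matrix.mul_assoc, ← pow_succ',
          show i - 1 - l + 1 = i + 1 - 1 - l by omega]
      rw [hsum, Finset.sum_range_succ]
      have h0 : (A ^ (i + 1 - 1 - i) * B) = B := by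
        simp
      rw [h0]
      abel
  -- factorization
  classical
  set G : Matrix (Fin L × Fin m ⊕ Fin L × Fin p) (Fin L × Fin m ⊕ Fin nz) ℝ :=
    Matrix.of (fun r c => match r, c with
      | Sum.inl lb', Sum.inl lb => if lb' = lb then (1 : ℝ) else 0
      | Sum.inl _, Sum.inr _ => 0
      | Sum.inr ia, Sum.inl lb =>
          if (lb.1 : ℕ) < (ia.1 : ℕ) then (C * A ^ ((ia.1 : ℕ) - 1 - (lb.1 : ℕ)) * B) ia.2 lb.2
          else if (lb.1 : ℕ) = (ia.1 : ℕ) then D ia.2 lb.2 else 0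
      | Sum.inr ia, Sum.inr c => (C * A ^ (ia.1 : ℕ)) ia.2 c) with hG
  set W : Matrix (Fin L × Fin m ⊕ Fin nz) (Fin (nd - L + 1)) ℝ :=
    Matrix.of (fun r j => match r with
      | Sum.inl lb => ud ((lb.1 : ℕ) + (j : ℕ)) lb.2
      | Sum.inr c => Φ (x (j : ℕ)) c) with hW
  have hfact : Matrix.fromRows (hankel m L nd ud) (hankel p L nd yd) = G * W := by
    ext r j
    cases r with
    | inl ia =>
      simp only [Matrix.fromRows_apply_inl, Matrix.of_apply, Sum.elim_inl, hankel]
      rw [Matrix.mul_apply, Fintype.sum_sum_type]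
      simp only [hG, hW, Matrix.of_apply]
      simp [ite_mul]
    | inr ia =>
      obtain ⟨i, a⟩ := ia
      have hij : (i : ℕ) + (j : ℕ) < nd := by
        have h1 : (i : ℕ) < L := i.isLt
        have h2 : (j : ℕ) < nd - L + 1 := j.isLt
        omega
      have hy := (hx ((i : ℕ) + (j : ℕ)) hij).2
      have hxv := hprop (i : ℕ) (j : ℕ) (by omega)
      -- LHS value
      have lhs_eq : yd ((i : ℕ) + (j : ℕ)) a
          = ((C * A ^ (i : ℕ)).mulVec (Φ (x (j : ℕ)))) a
            + ∑ l ∈ Finset.range (i : ℕ),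
                ((C * A ^ ((i : ℕ) - 1 - l) * B).mulVec (ud ((j : ℕ) + l))) a
            + (D.mulVec (ud ((i : ℕ) + (j : ℕ)))) a := by
        rw [hy, hout]
        have : x ((i : ℕ) + (j : ℕ)) = x ((j : ℕ) + (i : ℕ)) := by rw [Nat.add_comm]
        rw [this, hxv, Matrix.mulVec_add, Matrix.mulVec_mulVec]
        have hm := map_sum (Matrix.mulVecLin C)
          (fun l => (A ^ ((i : ℕ) - 1 - l) * B).mulVec (ud ((j : ℕ) + l))) (Finset.range (i : ℕ))
        simp only [Matrix.mulVecLin_apply] at hm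
        simp only [Pi.add_apply, hm]
        rw [Finset.sum_apply]
        have hterm : ∀ l ∈ Finset.range (i : ℕ),
            C.mulVec ((A ^ ((i : ℕ) - 1 - l) * B).mulVec (ud ((j : ℕ) + l))) a
              = ((C * A ^ ((i : ℕ) - 1 - l) * B).mulVec (ud ((j : ℕ) + l))) a := by
          intro l _
          rw [Matrix.mulVec_mulVec, Matrix.mul_assoc]
        rw [Finset.sum_congr rfl hterm]
      -- RHS value
      simp only [Matrix.fromRows_apply_inr, Matrix.of_apply, Sum.elim_inr, hankel]
      rw [Matrix.mul_apply, Fintype.sum_sum_type]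
      simp only [hG, hW, Matrix.of_apply]
      rw [lhs_eq]
      have hsplit : (∑ lb : Fin L × Fin m,
            (if (lb.1 : ℕ) < (i : ℕ) then (C * A ^ ((i : ℕ) - 1 - (lb.1 : ℕ)) * B) a lb.2
             else if (lb.1 : ℕ) = (i : ℕ) then D a lb.2 else 0) * ud ((lb.1 : ℕ) + (j : ℕ)) lb.2)
          = ∑ l ∈ Finset.range (i : ℕ),
                ((C * A ^ ((i : ℕ) - 1 - l) * B).mulVec (ud ((j : ℕ) + l))) a
            + (D.mulVec (ud ((i : ℕ) + (j : ℕ)))) a := by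
        rw [Fintype.sum_prod_type]
        have step : ∀ l : Fin L,
            (∑ b : Fin m,
              (if (l : ℕ) < (i : ℕ) then (C * A ^ ((i : ℕ) - 1 - (l : ℕ)) * B) a b
               else if (l : ℕ) = (i : ℕ) then D a b else 0) * ud ((l : ℕ) + (j : ℕ)) b)
            = (if (l : ℕ) < (i : ℕ) then
                 ((C * A ^ ((i : ℕ) - 1 - (l : ℕ)) * B).mulVec (ud ((j : ℕ) + (l : ℕ)))) a
               else 0)
              + (if (l : ℕ) = (i : ℕ) then (D.mulVec (ud ((i : ℕ) + (j : ℕ)))) a else 0) := by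
          intro l
          by_cases h1 : (l : ℕ) < (i : ℕ)
          · have hne : ¬ ((l : ℕ) = (i : ℕ)) := by omega
            simp only [h1, if_true, hne, if_false, add_zero]
            rw [show (l : ℕ) + (j : ℕ) = (j : ℕ) + (l : ℕ) from Nat.add_comm _ _]
            simp [Matrix.mulVec, dotProduct]
          · by_cases h2 : (l : ℕ) = (i : ℕ)
            · simp only [h2, lt_irrefl, if_false, if_true, zero_add]
              simp [Matrix.mulVec, dotProduct]
            · simp [h1, h2]
        simp only [step]
        rw [Finset.sum_add_distrib]
        congr 1
        · rw [Fin.sum_univ_eq_sum_range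
            (fun l => if l < (i : ℕ) then
              ((C * A ^ ((i : ℕ) - 1 - l) * B).mulVec (ud ((j : ℕ) + l))) a else 0) L]
          rw [← Finset.sum_subset (Finset.range_subset_range.mpr (le_of_lt i.isLt))
            (fun l _ hl => by
              rw [if_neg]; exact fun h => hl (Finset.mem_range.mpr h))]
          refine Finset.sum_congr rfl fun l hl => ?_
          rw [if_pos (Finset.mem_range.mp hl)]
        · simp only [Fin.val_eq_val]
          rw [Finset.sum_ite_eq' Finset.univ i]
          simp
      rw [hsplit]
      have hmv : ∑ c, (C * A ^ (i : ℕ)) a c * Φ (x (j : ℕ)) c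
          = ((C * A ^ (i : ℕ)).mulVec (Φ (x (j : ℕ)))) a := rfl
      rw [hmv]
      ring
  rw [hfact]
  calc (G * W).rank ≤ W.rank := Matrix.rank_mul_le_right G W
    _ ≤ Fintype.card (Fin L × Fin m ⊕ Fin nz) := W.rank_le_card_height
    _ = m * L + nz := by simp [Nat.mul_comm]

theorem rank_bound_koopman_and_nonexistence
    (n m p nz nd L : ℕ) (hL : 1 ≤ L) (hLnd : L ≤ nd)
    (f : (Fin n → ℝ) → (Fin m → ℝ) → (Fin n → ℝ))
    (g : (Fin n → ℝ) → (Fin m → ℝ) → (Fin p → ℝ))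
    (Φ : (Fin n → ℝ) → (Fin nz → ℝ))
    (A : Matrix (Fin nz) (Fin nz) ℝ) (B : Matrix (Fin nz) (Fin m) ℝ)
    (C : Matrix (Fin p) (Fin nz) ℝ) (D : Matrix (Fin p) (Fin m) ℝ)
    -- (Φ, A, B, C, D) is a Koopman linear embedding of the nonlinear system (f, g):
    (hdyn : ∀ x u, Φ (f x u) = A.mulVec (Φ x) + B.mulVec u)
    (hout : ∀ x u, g x u = C.mulVec (Φ x) + D.mulVec u)
    -- (u_d, y_d) is a length-n_d input-output trajectory of the nonlinear system:
    (ud : ℕ → Fin m → ℝ) (yd : ℕ → Fin p → ℝ)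
    (hdata : ∃ x : ℕ → (Fin n → ℝ),
      ∀ k < nd, x (k + 1) = f (x k) (ud k) ∧ yd k = g (x k) (ud k)) :
    -- rank(H_d) ≤ mL + n_z, where H_d = col(𝓗_L(u_d), 𝓗_L(y_d)):
    (Matrix.fromRows (hankel m L nd ud) (hankel p L nd yd)).rank ≤ m * L + nz ∧
    -- consequently, if rank(H_d) > mL + n̄_z, then the system admits no Koopman linear
    -- embedding of dimension at most n̄_z:
    (∀ nbarz : ℕ,
      m * L + nbarz < (Matrix.fromRows (hankel m L nd ud) (hankel p L nd yd)).rank →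
      ¬ ∃ (nz' : ℕ) (_ : nz' ≤ nbarz) (Φ' : (Fin n → ℝ) → (Fin nz' → ℝ))
          (A' : Matrix (Fin nz') (Fin nz') ℝ) (B' : Matrix (Fin nz') (Fin m) ℝ)
          (C' : Matrix (Fin p) (Fin nz') ℝ) (D' : Matrix (Fin p) (Fin m) ℝ),
        (∀ x u, Φ' (f x u) = A'.mulVec (Φ' x) + B'.mulVec u) ∧
        (∀ x u, g x u = C'.mulVec (Φ' x) + D'.mulVec u)) := by
  refine ⟨koopman_rank_aux n m p nz nd L hL hLnd f g Φ A B C D hdyn hout ud yd hdata, ?_⟩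
  intro nbarz hlt hE
  obtain ⟨nz', hnz', Φ', A', B', C', D', h1, h2⟩ := hE
  have hb := koopman_rank_aux n m p nz' nd L hL hLnd f g Φ' A' B' C' D' h1 h2 ud yd hdata
  omega
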